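/- Let d ≥ 1, g, h ∈ ℝ with g < 0, h < 0 and g ≠ h, let A ∈ ℂ with A ≠ 0 and k ∈ ℝ^d with k ≠ 0, and let φ(t,x) = A·exp(i(ωt − k·x)) be the plane wave with frequency ω = ‖k‖/√(−h). Then φ satisfies the Carrollian equation (□_g ∘ □_h)φ = 0 identically, but does NOT satisfy the equation (□_g ∘ □_g)φ = 0 (the Lorentzian-type equation with a single coupling). Hence the solution set of the Carrollian higher-derivative theory with distinct couplings is strictly larger than that of the theory with equal couplings. -/

import Mathlib

/-- Second time derivative: `(∂²φ/∂t²)(t,x)`. -/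
noncomputable def dtt (d : ℕ) (φ : ℝ × EuclideanSpace ℝ (Fin d) → ℂ) :
    ℝ × EuclideanSpace ℝ (Fin d) → ℂ :=
  fun p => deriv (deriv (fun u : ℝ => φ (u, p.2))) p.1

/-- Spatial Laplacian: `Σ_a (∂²φ/∂x_a²)(t,x)`, computed as second directional
derivatives along the coordinate directions. -/
noncomputable def lap (d : ℕ) (φ : ℝ × EuclideanSpace ℝ (Fin d) → ℂ) :
    ℝ × EuclideanSpace ℝ (Fin d) → ℂ :=
  fun p => ∑ a : Fin d,
    deriv (deriv (fun u : ℝ => φ (p.1, p.2 + u • EuclideanSpace.single a (1 : ℝ)))) 0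

/-- The Carrollian operator `□_g φ = g ∂²φ/∂t² + Δφ`. -/
noncomputable def carrollBox (d : ℕ) (g : ℝ) (φ : ℝ × EuclideanSpace ℝ (Fin d) → ℂ) :
    ℝ × EuclideanSpace ℝ (Fin d) → ℂ :=
  fun p => (g : ℂ) * dtt d φ p + lap d φ p

/-- The plane wave `φ(t,x) = A·exp(i(ωt − k·x))`. -/
noncomputable def planeWave (d : ℕ) (A : ℂ) (ω : ℝ) (k : EuclideanSpace ℝ (Fin d)) :
    ℝ × EuclideanSpace ℝ (Fin d) → ℂ :=
  fun p => A * Complex.exp (Complex.I * (((ω * p.1 : ℝ) : ℂ) - ((inner ℝ k p.2 : ℝ) : ℂ)))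

lemma hasDerivAt_aux (A c b : ℂ) (u : ℝ) :
    HasDerivAt (fun u : ℝ => A * Complex.exp (c * u + b))
      (c * (A * Complex.exp (c * u + b))) u := by
  have h1 : HasDerivAt (fun u : ℝ => (u : ℂ)) 1 u := by
    simpa using (hasDerivAt_id u).ofReal_comp
  have h2 : HasDerivAt (fun u : ℝ => c * (u : ℂ) + b) c u := by
    simpa using (h1.const_mul c).add_const b
  have h3 := h2.cexp
  have h4 := h3.const_mul A
  exact h4.congr_deriv (by ring)

lemma deriv2_aux (A c b : ℂ) :
    deriv (deriv (fun u : ℝ => A * Complex.exp (c * u + b)))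
      = fun u : ℝ => c ^ 2 * (A * Complex.exp (c * u + b)) := by
  have hd : deriv (fun u : ℝ => A * Complex.exp (c * u + b))
      = fun u : ℝ => (c * A) * Complex.exp (c * u + b) := by
    funext u
    rw [(hasDerivAt_aux A c b u).deriv]; ring
  rw [hd]
  funext u
  rw [(hasDerivAt_aux (c * A) c b u).deriv]; ring

lemma dtt_planeWave (d : ℕ) (A : ℂ) (ω : ℝ) (k : EuclideanSpace ℝ (Fin d))
    (p : ℝ × EuclideanSpace ℝ (Fin d)) :
    dtt d (planeWave d A ω k) p = (-(ω : ℂ) ^ 2) * planeWave d A ω k p := by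
  unfold dtt planeWave
  have h : (fun u : ℝ => A * Complex.exp (Complex.I * (((ω * u : ℝ) : ℂ) - ((inner ℝ k p.2 : ℝ) : ℂ))))
      = fun u : ℝ => A * Complex.exp ((Complex.I * ω) * u + (-(Complex.I * ((inner ℝ k p.2 : ℝ) : ℂ)))) := by
    funext u; push_cast; ring_nf
  rw [h, deriv2_aux]
  have : Complex.I * (((ω * p.1 : ℝ) : ℂ) - ((inner ℝ k p.2 : ℝ) : ℂ))
      = (Complex.I * ω) * p.1 + (-(Complex.I * ((inner ℝ k p.2 : ℝ) : ℂ))) := by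
    push_cast; ring
  rw [this]
  have hI : (Complex.I * ω) ^ 2 = -(ω : ℂ) ^ 2 := by
    rw [mul_pow, Complex.I_sq]; try ring
  rw [hI]
  try ring

lemma lap_planeWave (d : ℕ) (A : ℂ) (ω : ℝ) (k : EuclideanSpace ℝ (Fin d))
    (p : ℝ × EuclideanSpace ℝ (Fin d)) :
    lap d (planeWave d A ω k) p = (-(‖k‖ : ℂ) ^ 2) * planeWave d A ω k p := by
  unfold lap planeWave
  have hsum : ∀ a : Fin d,
      deriv (deriv (fun u : ℝ => A * Complex.exp (Complex.I *
        (((ω * p.1 : ℝ) : ℂ) - ((inner ℝ k (p.2 + u • EuclideanSpace.single a (1 : ℝ)) : ℝ) : ℂ))))) 0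
      = (-(k a : ℂ) ^ 2) * (A * Complex.exp (Complex.I * (((ω * p.1 : ℝ) : ℂ) - ((inner ℝ k p.2 : ℝ) : ℂ)))) := by
    intro a
    have hin : ∀ u : ℝ, (inner ℝ k (p.2 + u • EuclideanSpace.single a (1 : ℝ)) : ℝ)
        = (inner ℝ k p.2 : ℝ) + u * k a := by
      intro u
      rw [inner_add_right, real_inner_smul_right, EuclideanSpace.inner_single_right]
      simp [mul_comm]
    have h : (fun u : ℝ => A * Complex.exp (Complex.I *
        (((ω * p.1 : ℝ) : ℂ) - ((inner ℝ k (p.2 + u • EuclideanSpace.single a (1 : ℝ)) : ℝ) : ℂ))))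
        = fun u : ℝ => A * Complex.exp ((-(Complex.I * (k a : ℂ))) * u
            + (Complex.I * (((ω * p.1 : ℝ) : ℂ) - ((inner ℝ k p.2 : ℝ) : ℂ)))) := by
      funext u; rw [hin u]; push_cast; ring_nf
    rw [h, deriv2_aux]
    have hI : (-(Complex.I * (k a : ℂ))) ^ 2 = -(k a : ℂ) ^ 2 := by
      rw [neg_pow, mul_pow, Complex.I_sq]; ring
    simp only [hI, Complex.ofReal_zero, mul_zero, neg_zero, zero_add]
    try ring_nf
  rw [Finset.sum_congr rfl (fun a _ => hsum a), ← Finset.sum_mul]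
  have hnorm : (∑ a : Fin d, -(k a : ℂ) ^ 2) = -(‖k‖ : ℂ) ^ 2 := by
    have h1 : (‖k‖ : ℝ) ^ 2 = ∑ a : Fin d, k a ^ 2 := by
      rw [← real_inner_self_eq_norm_sq]
      simp only [PiLp.inner_apply, RCLike.inner_apply, conj_trivial, sq]
    have h2 : ((‖k‖ : ℂ)) ^ 2 = ∑ a : Fin d, ((k a : ℂ)) ^ 2 := by
      rw [← Complex.ofReal_pow, h1]
      push_cast
      rfl
    rw [h2, ← Finset.sum_neg_distrib]
  rw [hnorm]

lemma carrollBox_planeWave (d : ℕ) (g : ℝ) (A : ℂ) (ω : ℝ) (k : EuclideanSpace ℝ (Fin d)) :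
    carrollBox d g (planeWave d A ω k)
      = planeWave d ((-((g : ℂ) * (ω : ℂ) ^ 2 + (‖k‖ : ℂ) ^ 2)) * A) ω k := by
  funext p
  unfold carrollBox
  rw [dtt_planeWave, lap_planeWave]
  show _ = (-((g : ℂ) * (ω : ℂ) ^ 2 + (‖k‖ : ℂ) ^ 2)) * A * Complex.exp _
  unfold planeWave
  ring

/-- for distinct negative couplings `g ≠ h`, the plane wave with
frequency `ω = ‖k‖/√(−h)` (and `A ≠ 0`, `k ≠ 0`) solves `(□_g ∘ □_h)φ = 0` but not
`(□_g ∘ □_g)φ = 0`: the Carrollian theory with distinct couplings has strictly more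
solutions than the one with equal couplings. -/
theorem distinct_couplings_strictly_larger (d : ℕ) (hd : 1 ≤ d) (g h : ℝ)
    (hg : g < 0) (hh : h < 0) (hgh : g ≠ h) (A : ℂ) (hA : A ≠ 0)
    (k : EuclideanSpace ℝ (Fin d)) (hk : k ≠ 0) :
    (∀ p : ℝ × EuclideanSpace ℝ (Fin d),
        carrollBox d g (carrollBox d h (planeWave d A (‖k‖ / Real.sqrt (-h)) k)) p = 0)
    ∧ ¬ (∀ p : ℝ × EuclideanSpace ℝ (Fin d),
        carrollBox d g (carrollBox d g (planeWave d A (‖k‖ / Real.sqrt (-h)) k)) p = 0) := by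
  set ω : ℝ := ‖k‖ / Real.sqrt (-h) with hω
  have hh0 : h ≠ 0 := ne_of_lt hh
  have hknorm : (0 : ℝ) < ‖k‖ := norm_pos_iff.mpr hk
  have hs : Real.sqrt (-h) ^ 2 = -h := Real.sq_sqrt (by linarith)
  have hspos : (0 : ℝ) < Real.sqrt (-h) := Real.sqrt_pos.mpr (by linarith)
  have hω2 : ω ^ 2 = ‖k‖ ^ 2 / (-h) := by
    rw [hω, div_pow, hs]
  have hch : -((h : ℂ) * (ω : ℂ) ^ 2 + (‖k‖ : ℂ) ^ 2) = 0 := by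
    have hre : h * ω ^ 2 + ‖k‖ ^ 2 = 0 := by
      rw [hω2]
      have hnh : -h ≠ 0 := (by linarith : (0:ℝ) < -h).ne'
      field_simp
      ring
    rw [neg_eq_zero]
    exact_mod_cast hre
  have hcg : -((g : ℂ) * (ω : ℂ) ^ 2 + (‖k‖ : ℂ) ^ 2) ≠ 0 := by
    have hre : g * ω ^ 2 + ‖k‖ ^ 2 ≠ 0 := by
      rw [hω2]
      intro h0
      apply hgh
      have hk2 : ‖k‖ ^ 2 ≠ 0 := by positivity
      have hnh : -h ≠ 0 := (by linarith : (0:ℝ) < -h).ne'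
      field_simp at h0
      exact mul_right_cancel₀ hk2 (by linear_combination -h0)
    rw [neg_ne_zero]
    exact_mod_cast hre
  constructor
  · intro p
    rw [carrollBox_planeWave, carrollBox_planeWave, hch]
    unfold planeWave
    simp
  · intro hcon
    have h0 := hcon (0, 0)
    rw [carrollBox_planeWave, carrollBox_planeWave] at h0
    unfold planeWave at h0
    exact absurd h0 (mul_ne_zero (mul_ne_zero hcg (mul_ne_zero hcg hA)) (Complex.exp_ne_zero _))
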